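/- arXiv:1807.04566 — 5 statements merged into one kernel-verified Lean document; each statement's English description precedes it below -/
import Mathlib

section
/- Let Z be a real Gaussian random variable with mean ξ and variance σ² > 0, and let f : ℝ → [0,∞) be a non-null, continuous, even function (integrable against the Gaussian weighted by |z|). Then E[f(Z)·Z] = 0 if and only if ξ = 0. -/
open MeasureTheory ProbabilityTheory

open Real

private lemma gpdf_neg_le' (ξ : ℝ) (v : NNReal) {z : ℝ} (h : 0 ≤ ξ * z) :
    gaussianPDFReal ξ v (-z) ≤ gaussianPDFReal ξ v z := by
  rcases eq_or_ne v 0 with rfl | hv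
  · simp
  have hv2 : (0:ℝ) < 2 * v := by positivity
  unfold gaussianPDFReal
  refine mul_le_mul_of_nonneg_left (Real.exp_le_exp.mpr ?_) (by positivity)
  exact (div_le_div_iff_of_pos_right hv2).mpr (by nlinarith)

private lemma gpdf_neg_lt' (ξ : ℝ) {v : NNReal} (hv : v ≠ 0) {z : ℝ} (h : 0 < ξ * z) :
    gaussianPDFReal ξ v (-z) < gaussianPDFReal ξ v z := by
  have hv2 : (0:ℝ) < 2 * v := by positivity
  unfold gaussianPDFReal
  refine mul_lt_mul_of_pos_left (Real.exp_lt_exp.mpr ?_) (by positivity)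
  exact (div_lt_div_iff_of_pos_right hv2).mpr (by nlinarith)

private lemma two_mul_integral' (ξ : ℝ) (v : NNReal) (hv : v ≠ 0) (f : ℝ → ℝ)
    (hf_even : ∀ x, f (-x) = f x)
    (hint : Integrable (fun z => f z * z) (gaussianReal ξ v)) :
    2 * (∫ z, f z * z ∂(gaussianReal ξ v))
      = ∫ z, (gaussianPDFReal ξ v z - gaussianPDFReal ξ v (-z)) * (f z * z) ∧
    Integrable (fun z =>
      (gaussianPDFReal ξ v z - gaussianPDFReal ξ v (-z)) * (f z * z)) volume := by
  set φ := gaussianPDFReal ξ v with hφ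
  have hmeas : Measurable fun z => (φ z).toNNReal :=
    (measurable_gaussianPDFReal ξ v).real_toNNReal
  have hdens : gaussianReal ξ v = volume.withDensity fun z => ((φ z).toNNReal : ENNReal) := by
    rw [gaussianReal_of_var_ne_zero ξ hv]
    rfl
  set G : ℝ → ℝ := fun z => φ z * (f z * z) with hG
  have hcoe : ∀ z, ((φ z).toNNReal : ℝ) = φ z := fun z =>
    Real.coe_toNNReal _ (gaussianPDFReal_nonneg ξ v z)
  have hGint : Integrable G volume := by
    have := (integrable_withDensity_iff_integrable_smul (E := ℝ) hmeas
      (g := fun z => f z * z)).mp (by rwa [hdens] at hint)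
    refine this.congr (Filter.Eventually.of_forall fun z => ?_)
    simp [G, NNReal.smul_def, hcoe z]
  have hI : (∫ z, f z * z ∂(gaussianReal ξ v)) = ∫ z, G z := by
    rw [hdens, integral_withDensity_eq_integral_smul hmeas]
    refine integral_congr_ae (Filter.Eventually.of_forall fun z => ?_)
    simp [G, NNReal.smul_def, hcoe z]
  have hemb : MeasurableEmbedding (fun x : ℝ => -x) :=
    (Homeomorph.neg ℝ).isClosedEmbedding.measurableEmbedding
  have hGnegint : Integrable (fun z => G (-z)) volume := by
    have := (hemb.integrable_map_iff (g := G) (μ := volume)).mp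
      (by rwa [Measure.map_neg_eq_self (volume : Measure ℝ)])
    exact this
  have hGnegI : (∫ z, G (-z)) = ∫ z, G z := by
    have := hemb.integral_map (μ := volume) (g := G)
    rw [Measure.map_neg_eq_self (volume : Measure ℝ)] at this
    exact this.symm
  have hDeq : ∀ z, (φ z - φ (-z)) * (f z * z) = G z + G (-z) := by
    intro z
    simp only [G, hf_even]
    ring
  constructor
  · calc 2 * (∫ z, f z * z ∂(gaussianReal ξ v)) = (∫ z, G z) + ∫ z, G (-z) := by
          rw [hI, hGnegI]; ring
    _ = ∫ z, (G z + G (-z)) := (integral_add hGint hGnegint).symm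
    _ = _ := by simp_rw [hDeq]
  · exact (hGint.add hGnegint).congr (Filter.Eventually.of_forall fun z => (hDeq z).symm)

/-- for `Z ~ N(ξ, σ²)` with `σ² ≠ 0` and a nonnegative, continuous, even,
not identically zero function `f` such that `f(Z)·Z` is integrable,
`E[f(Z)·Z] = 0` if and only if `ξ = 0`. -/
theorem gaussian_even_weight_mean_1d (ξ : ℝ) (v : NNReal) (hv : v ≠ 0)
    (f : ℝ → ℝ) (hf_cont : Continuous f) (hf_nonneg : ∀ x, 0 ≤ f x)
    (hf_even : ∀ x, f (-x) = f x) (hf_ne : f ≠ 0)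
    (hint : Integrable (fun z => f z * z) (gaussianReal ξ v)) :
    (∫ z, f z * z ∂(gaussianReal ξ v)) = 0 ↔ ξ = 0 := by
  obtain ⟨hEq, hInt⟩ := two_mul_integral' ξ v hv f hf_even hint
  set φ := gaussianPDFReal ξ v with hφ
  set D : ℝ → ℝ := fun z => (φ z - φ (-z)) * (f z * z) with hD
  have hφcont : Continuous φ := by
    rw [hφ]
    unfold gaussianPDFReal
    fun_prop
  have hDcont : Continuous D :=
    (hφcont.sub (hφcont.comp continuous_neg)).mul (hf_cont.mul continuous_id)
  constructor
  · intro hI0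
    by_contra hξ
    -- find a point z1 > 0 where f is positive
    obtain ⟨z1, hz1pos, hfz1⟩ : ∃ z1 : ℝ, 0 < z1 ∧ 0 < f z1 := by
      obtain ⟨z0, hz0⟩ := Function.ne_iff.mp hf_ne
      have hfz0 : 0 < f z0 := lt_of_le_of_ne (hf_nonneg z0) (by simpa using hz0.symm)
      rcases eq_or_ne z0 0 with rfl | hne
      · obtain ⟨δ, hδ, h⟩ := Metric.continuousAt_iff.mp hf_cont.continuousAt (f 0 / 2)
          (by positivity)
        refine ⟨δ / 2, by positivity, ?_⟩
        have hd : dist (δ / 2) 0 < δ := by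
          rw [Real.dist_eq, sub_zero, abs_of_pos (by positivity)]; linarith
        have := abs_lt.mp (Real.dist_eq _ _ ▸ h hd)
        linarith [this.1]
      · refine ⟨|z0|, abs_pos.mpr hne, ?_⟩
        rcases abs_cases z0 with ⟨h, _⟩ | ⟨h, _⟩ <;> rw [h]
        · exact hfz0
        · rw [hf_even]; exact hfz0
    set s : ℝ := if 0 < ξ then 1 else -1 with hs
    have hφle : ∀ z : ℝ, 0 ≤ ξ * z → φ (-z) ≤ φ z := fun z h => gpdf_neg_le' ξ v h
    have hsnn : ∀ z, 0 ≤ s * D z := by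
      intro z
      have hfz := hf_nonneg z
      simp only [hD]
      rcases le_or_gt 0 z with hz | hz <;> rcases lt_or_ge 0 ξ with hxp | hxn
      · have h1 := hφle z (mul_nonneg hxp.le hz)
        rw [hs, if_pos hxp]
        nlinarith [mul_nonneg (sub_nonneg.mpr h1) (mul_nonneg hfz hz)]
      · have h1 : φ z ≤ φ (-z) := by
          have := hφle (-z) (by nlinarith)
          rwa [neg_neg] at this
        rw [hs, if_neg (not_lt.mpr hxn)]
        nlinarith [mul_nonneg (sub_nonneg.mpr h1) (mul_nonneg hfz hz)]
      · have h1 : φ z ≤ φ (-z) := by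
          have := hφle (-z) (by nlinarith)
          rwa [neg_neg] at this
        rw [hs, if_pos hxp]
        nlinarith [mul_nonneg (sub_nonneg.mpr h1) (mul_nonneg hfz (neg_nonneg.mpr hz.le))]
      · have h1 := hφle z (by nlinarith)
        rw [hs, if_neg (not_lt.mpr hxn)]
        nlinarith [mul_nonneg (sub_nonneg.mpr h1) (mul_nonneg hfz (neg_nonneg.mpr hz.le))]
    have hstrict : 0 < s * D z1 := by
      simp only [hD]
      rcases lt_or_ge 0 ξ with hxp | hxn
      · have h1 : φ (-z1) < φ z1 := gpdf_neg_lt' ξ hv (mul_pos hxp hz1pos)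
        rw [hs, if_pos hxp]
        nlinarith [mul_pos (sub_pos.mpr h1) (mul_pos hfz1 hz1pos)]
      · have hxn' : ξ < 0 := lt_of_le_of_ne hxn hξ
        have h1 : φ z1 < φ (-z1) := by
          have := gpdf_neg_lt' ξ hv (z := -z1) (by nlinarith)
          rwa [neg_neg] at this
        rw [hs, if_neg (not_lt.mpr hxn)]
        nlinarith [mul_pos (sub_pos.mpr h1) (mul_pos hfz1 hz1pos)]
    have hsDint : Integrable (fun z => s * D z) volume := hInt.const_mul s
    have hsupp : 0 < volume (Function.support fun z => s * D z) := by
      have hUopen : IsOpen {z : ℝ | 0 < s * D z} :=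
        isOpen_lt continuous_const (continuous_const.mul hDcont)
      refine lt_of_lt_of_le (hUopen.measure_pos volume ⟨z1, hstrict⟩) (measure_mono ?_)
      intro z hz
      exact ne_of_gt hz
    have hpos : 0 < ∫ z, s * D z :=
      (integral_pos_iff_support_of_nonneg hsnn hsDint).mpr hsupp
    have hzero : (∫ z, s * D z) = 0 := by
      rw [integral_const_mul, ← hEq, hI0, mul_zero, mul_zero]
    linarith
  · rintro rfl
    have hD0 : ∀ z, D z = 0 := by
      intro z
      have hφeq : φ (-z) = φ z := by
        rw [hφ]
        unfold gaussianPDFReal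
        rw [sub_zero, sub_zero, neg_sq]
      simp [hD, hφeq]
    have h2 : (2 : ℝ) * (∫ z, f z * z ∂(gaussianReal 0 v)) = 0 := by
      rw [hEq]
      have : (fun z => (φ z - φ (-z)) * (f z * z)) = fun _ => (0:ℝ) := funext hD0
      calc (∫ z, (φ z - φ (-z)) * (f z * z)) = ∫ _z, (0:ℝ) := by rw [this]
      _ = 0 := integral_zero _ _
    linarith
end

section
/- Let Z be an m-dimensional Gaussian random vector with mean ξ ∈ ℝ^m and covariance matrix σ² I_m with σ ≠ 0. Let f : ℝ^m → [0,∞) be non-null, continuous, and even in each coordinate separately (i.e., f(x₁,…,x_i,…,x_m) = f(x₁,…,−x_i,…,x_m) for each i), with f(Z)·Z integrable. Then E[f(Z)·Z] = 0 if and only if ξ = 0. -/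
open MeasureTheory ProbabilityTheory

open scoped ENNReal NNReal

namespace GaussianEvenAux

variable {m : ℕ}

lemma gaussianReal_isOpenPosMeasure (c : ℝ) {v : ℝ≥0} (hv : v ≠ 0) :
    (gaussianReal c v).IsOpenPosMeasure := by
  refine ⟨fun U hU hne h0 => ?_⟩
  exact hU.measure_ne_zero volume hne (gaussianReal_absolutelyContinuous' c hv h0)

lemma lmarginal_const (ν : Fin m → Measure ℝ) [∀ j, SigmaFinite (ν j)]
    (s : Finset (Fin m)) (c : ℝ≥0∞) (x : Fin m → ℝ) :
    (∫⋯∫⁻_s, (fun _ => c) ∂ν) x = c * ∏ j ∈ s, ν j Set.univ := by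
  induction s using Finset.induction generalizing x with
  | empty => simp
  | @insert i s hi ih =>
    rw [lmarginal_insert _ measurable_const hi]
    simp_rw [ih]
    rw [lintegral_const, Finset.prod_insert hi]
    ring

lemma lintegral_eval (ν : Fin m → Measure ℝ) [∀ j, SigmaFinite (ν j)] {d : ℝ → ℝ≥0∞}
    (hd : Measurable d) (i : Fin m) :
    ∫⁻ x, d (x i) ∂Measure.pi ν
      = (∫⁻ t, d t ∂ν i) * ∏ j ∈ Finset.univ.erase i, ν j Set.univ := by
  have hm : Measurable fun x : Fin m → ℝ => d (x i) := hd.comp (measurable_pi_apply i)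
  rw [lintegral_eq_lmarginal_univ (fun _ => 0),
    ← Finset.insert_erase (Finset.mem_univ i),
    lmarginal_insert' _ hm (Finset.notMem_erase i _)]
  simp only [Function.update_self]
  rw [Finset.erase_insert (Finset.notMem_erase i _), lmarginal_const]

lemma pi_restrict (ν : Fin m → Measure ℝ) [∀ j, SigmaFinite (ν j)] {s : Fin m → Set ℝ}
    (hs : ∀ j, MeasurableSet (s j)) :
    Measure.pi (fun j => (ν j).restrict (s j))
      = (Measure.pi ν).restrict (Set.pi Set.univ s) := by
  refine Measure.pi_eq fun t ht => ?_
  rw [Measure.restrict_apply (MeasurableSet.univ_pi ht), ← Set.pi_inter_distrib, Measure.pi_pi]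
  exact Finset.prod_congr rfl fun j _ => (Measure.restrict_apply (ht j)).symm

lemma gaussianReal_neg_preimage (c : ℝ) (v : ℝ≥0) {s : Set ℝ} (hs : MeasurableSet s) :
    gaussianReal c v (Neg.neg ⁻¹' s) = gaussianReal (-c) v s := by
  have h := gaussianReal_map_const_mul (μ := c) (v := v) (-1)
  have hv1 : (NNReal.mk ((-1:ℝ)^2) (sq_nonneg _) : ℝ≥0) = 1 := by ext; norm_num
  rw [hv1, one_mul, neg_one_mul] at h
  rw [← h, Measure.map_apply (measurable_const_mul _) hs]
  congr 1
  ext a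
  simp [neg_one_mul]

lemma pdf_mul_exp (c : ℝ) {v : ℝ≥0} (hv : v ≠ 0) (t : ℝ) :
    gaussianPDFReal c v t * Real.exp (-(2 * c * t) / v) = gaussianPDFReal (-c) v t := by
  have hv' : (v : ℝ) ≠ 0 := by exact_mod_cast hv
  simp only [gaussianPDFReal]
  rw [mul_assoc, ← Real.exp_add]
  congr 1
  field_simp
  ring

lemma lintegral_exp_gaussian (c : ℝ) {v : ℝ≥0} (hv : v ≠ 0) {s : Set ℝ}
    (hs : MeasurableSet s) :
    ∫⁻ t in s, ENNReal.ofReal (Real.exp (-(2 * c * t) / v)) ∂gaussianReal c v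
      = gaussianReal (-c) v s := by
  have hd : Measurable fun t : ℝ => ENNReal.ofReal (Real.exp (-(2 * c * t) / v)) := by
    apply ENNReal.measurable_ofReal.comp
    exact (Real.continuous_exp.comp (by continuity)).measurable
  rw [gaussianReal_of_var_ne_zero c hv,
    setLIntegral_withDensity_eq_setLIntegral_mul volume (measurable_gaussianPDF c v) hd hs,
    gaussianReal_of_var_ne_zero (-c) hv, withDensity_apply _ hs]
  refine setLIntegral_congr_fun hs (fun t _ => ?_)
  simp only [Pi.mul_apply, gaussianPDF_def]
  rw [← ENNReal.ofReal_mul (gaussianPDFReal_nonneg _ _ _), pdf_mul_exp c hv t]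

lemma measurable_reflect (i : Fin m) :
    Measurable fun x : Fin m → ℝ => Function.update x i (-(x i)) := by
  have h : (fun x : Fin m → ℝ => Function.update x i (-(x i)))
      = fun x j => if j = i then -(x j) else x j := by
    funext x j
    rw [Function.update_apply]
    split_ifs with h
    · subst h; rfl
    · rfl
  rw [h]
  apply measurable_pi_lambda
  intro j
  rcases eq_or_ne j i with rfl | hj
  · simp only [if_pos rfl]
    exact (measurable_pi_apply j).neg
  · simp only [if_neg hj]
    exact measurable_pi_apply j

lemma reflect_involutive (i : Fin m) :
    Function.Involutive fun x : Fin m → ℝ => Function.update x i (-(x i)) := by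
  intro x
  simp

noncomputable def reflectEquiv (i : Fin m) : (Fin m → ℝ) ≃ᵐ (Fin m → ℝ) where
  toEquiv := Function.Involutive.toPerm _ (reflect_involutive i)
  measurable_toFun := measurable_reflect i
  measurable_invFun := measurable_reflect i

lemma map_reflect (ξ : Fin m → ℝ) (v : ℝ≥0) (i : Fin m) :
    Measure.map (fun x : Fin m → ℝ => Function.update x i (-(x i)))
        (Measure.pi fun j => gaussianReal (ξ j) v)
      = Measure.pi (fun j => gaussianReal (Function.update ξ i (-(ξ i)) j) v) := by
  refine (Measure.pi_eq fun s hs => ?_).symm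
  rw [Measure.map_apply (measurable_reflect i) (MeasurableSet.univ_pi hs)]
  have hpre : (fun x : Fin m → ℝ => Function.update x i (-(x i))) ⁻¹' (Set.pi Set.univ s)
      = Set.pi Set.univ (Function.update s i (Neg.neg ⁻¹' s i)) := by
    ext x
    simp only [Set.mem_preimage, Set.mem_univ_pi]
    refine forall_congr' fun j => ?_
    rcases eq_or_ne j i with rfl | hj
    · simp
    · simp [Function.update_of_ne hj]
  rw [hpre, Measure.pi_pi]
  refine Finset.prod_congr rfl fun j _ => ?_
  rcases eq_or_ne j i with rfl | hj
  · simp only [Function.update_self]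
    exact gaussianReal_neg_preimage (ξ j) v (hs j)
  · simp [Function.update_of_ne hj]

lemma pi_update_eq_withDensity (ξ : Fin m → ℝ) {v : ℝ≥0} (hv : v ≠ 0) (i : Fin m) :
    Measure.pi (fun j => gaussianReal (Function.update ξ i (-(ξ i)) j) v)
      = (Measure.pi fun j => gaussianReal (ξ j) v).withDensity
          (fun x => ENNReal.ofReal (Real.exp (-(2 * ξ i * x i) / v))) := by
  have hd : Measurable fun t : ℝ => ENNReal.ofReal (Real.exp (-(2 * ξ i * t) / v)) := by
    apply ENNReal.measurable_ofReal.comp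
    exact (Real.continuous_exp.comp (by continuity)).measurable
  refine Measure.pi_eq fun s hs => ?_
  rw [withDensity_apply _ (MeasurableSet.univ_pi hs),
    ← pi_restrict (fun j => gaussianReal (ξ j) v) hs, lintegral_eval _ hd i,
    lintegral_exp_gaussian (ξ i) hv (hs i),
    ← Finset.mul_prod_erase Finset.univ _ (Finset.mem_univ i)]
  congr 1
  · simp
  · refine Finset.prod_congr rfl fun j hj => ?_
    rw [Measure.restrict_apply_univ, Function.update_of_ne (Finset.ne_of_mem_erase hj)]

lemma key_sign {v : ℝ≥0} (hv : v ≠ 0) (c t : ℝ) :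
    0 ≤ c * t * (1 - Real.exp (-(2 * c * t) / v)) := by
  have hv' : (0:ℝ) < v := by exact_mod_cast pos_iff_ne_zero.mpr hv
  rcases lt_trichotomy (c * t) 0 with h | h | h
  · have h1 : (0:ℝ) < -(2 * c * t) / v := div_pos (by nlinarith) hv'
    have h2 : 1 < Real.exp (-(2 * c * t) / v) := Real.one_lt_exp_iff.mpr h1
    nlinarith
  · rw [h, zero_mul]
  · have h1 : -(2 * c * t) / (v:ℝ) < 0 := div_neg_of_neg_of_pos (by nlinarith) hv'
    have h2 : Real.exp (-(2 * c * t) / v) < 1 := Real.exp_lt_one_iff.mpr h1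
    nlinarith

lemma key_sign_pos {v : ℝ≥0} (hv : v ≠ 0) {c t : ℝ} (hc : c ≠ 0) (ht : t ≠ 0) :
    0 < c * t * (1 - Real.exp (-(2 * c * t) / v)) := by
  have hv' : (0:ℝ) < v := by exact_mod_cast pos_iff_ne_zero.mpr hv
  rcases (mul_ne_zero hc ht).lt_or_gt with h | h
  · have h1 : (0:ℝ) < -(2 * c * t) / v := div_pos (by nlinarith) hv'
    have h2 : 1 < Real.exp (-(2 * c * t) / v) := Real.one_lt_exp_iff.mpr h1
    nlinarith
  · have h1 : -(2 * c * t) / (v:ℝ) < 0 := div_neg_of_neg_of_pos (by nlinarith) hv'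
    have h2 : Real.exp (-(2 * c * t) / v) < 1 := Real.exp_lt_one_iff.mpr h1
    nlinarith

lemma integral_reflect (ξ : Fin m → ℝ) (v : ℝ≥0) (i : Fin m)
    (f : (Fin m → ℝ) → ℝ) (hf_cont : Continuous f)
    (hf_even : ∀ x : Fin m → ℝ, f (Function.update x i (-(x i))) = f x) :
    ∫ x, f x * x i ∂(Measure.pi fun j => gaussianReal (Function.update ξ i (-(ξ i)) j) v)
      = - ∫ x, f x * x i ∂(Measure.pi fun j => gaussianReal (ξ j) v) := by
  rw [← map_reflect ξ v i, integral_map (measurable_reflect i).aemeasurable (f := fun x => f x * x i)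
    ((hf_cont.mul (continuous_apply i)).aestronglyMeasurable), ← integral_neg]
  refine integral_congr_ae (Filter.Eventually.of_forall fun x => ?_)
  simp only [Function.update_self, hf_even x]
  ring

end GaussianEvenAux

open GaussianEvenAux in
/-- for `Z ~ N(ξ, σ² I_m)` (modeled as the product of the one-dimensional
Gaussians `N(ξ_i, σ²)`) with `σ² ≠ 0`, and `f : ℝ^m → [0,∞)` continuous, not identically
zero, even in each coordinate separately, with `f(Z)·Z_i` integrable for each `i`,
`E[f(Z)·Z] = 0` (componentwise) if and only if `ξ = 0`. -/
theorem gaussian_even_weight_mean_multi (m : ℕ) (ξ : Fin m → ℝ) (v : NNReal) (hv : v ≠ 0)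
    (f : (Fin m → ℝ) → ℝ) (hf_cont : Continuous f) (hf_nonneg : ∀ x, 0 ≤ f x)
    (hf_even : ∀ (i : Fin m) (x : Fin m → ℝ), f (Function.update x i (-(x i))) = f x)
    (hf_ne : f ≠ 0)
    (hint : ∀ i : Fin m,
      Integrable (fun x => f x * x i) (Measure.pi fun i => gaussianReal (ξ i) v)) :
    (∀ i : Fin m,
        (∫ x, f x * x i ∂(Measure.pi fun i => gaussianReal (ξ i) v)) = 0) ↔ ξ = 0 := by
  constructor
  · intro H
    funext i
    show ξ i = 0
    by_contra hc
    have hI := H i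
    set w : ℝ → ℝ := fun t => Real.exp (-(2 * ξ i * t) / v) with hw
    have hwnn : ∀ t, 0 ≤ w t := fun t => (Real.exp_pos _).le
    have hcw : Continuous w := Real.continuous_exp.comp (by continuity)
    have hdnn : Measurable fun x : Fin m → ℝ => Real.toNNReal (w (x i)) :=
      measurable_real_toNNReal.comp ((hcw.comp (continuous_apply i)).measurable)
    have hB : (Measure.pi fun j => gaussianReal (Function.update ξ i (-(ξ i)) j) v)
        = (Measure.pi fun j => gaussianReal (ξ j) v).withDensity
            (fun x => ((Real.toNNReal (w (x i)) : ℝ≥0) : ℝ≥0∞)) := by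
      rw [pi_update_eq_withDensity ξ hv i]
      rfl
    have hA := integral_reflect ξ v i f hf_cont (hf_even i)
    have hRcoe : ⇑(reflectEquiv (m := m) i)
        = fun x : Fin m → ℝ => Function.update x i (-(x i)) := rfl
    have hInt' : Integrable (fun x : Fin m → ℝ => f x * x i)
        (Measure.pi fun j => gaussianReal (Function.update ξ i (-(ξ i)) j) v) := by
      rw [← map_reflect ξ v i, ← hRcoe,
        (reflectEquiv i).measurableEmbedding.integrable_map_iff]
      refine ((hint i).neg).congr (Filter.Eventually.of_forall fun x => ?_)
      simp only [Function.comp_apply, hRcoe, Function.update_self, hf_even i x, Pi.neg_apply]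
      ring
    have hIntW : Integrable (fun x => w (x i) * (f x * x i))
        (Measure.pi fun j => gaussianReal (ξ j) v) := by
      have h1 := (integrable_withDensity_iff_integrable_smul hdnn).mp (hB ▸ hInt')
      refine h1.congr (Filter.Eventually.of_forall fun x => ?_)
      simp [NNReal.smul_def, Real.coe_toNNReal _ (hwnn _)]
    have hEq2 : (∫ x, f x * x i
          ∂(Measure.pi fun j => gaussianReal (Function.update ξ i (-(ξ i)) j) v))
        = ∫ x, w (x i) * (f x * x i) ∂(Measure.pi fun j => gaussianReal (ξ j) v) := by
      rw [hB, integral_withDensity_eq_integral_smul hdnn]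
      refine integral_congr_ae (Filter.Eventually.of_forall fun x => ?_)
      simp [NNReal.smul_def, Real.coe_toNNReal _ (hwnn _)]
    have hW : ∫ x, w (x i) * (f x * x i) ∂(Measure.pi fun j => gaussianReal (ξ j) v) = 0 := by
      rw [← hEq2, hA, hI, neg_zero]
    have hsub : ∫ x, (f x * x i - w (x i) * (f x * x i))
        ∂(Measure.pi fun j => gaussianReal (ξ j) v) = 0 := by
      rw [integral_sub (hint i) hIntW, hI, hW, sub_zero]
    set h' : (Fin m → ℝ) → ℝ := fun x => ξ i * (f x * x i - w (x i) * (f x * x i)) with hh'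
    have hint2 : Integrable h' (Measure.pi fun j => gaussianReal (ξ j) v) :=
      ((hint i).sub hIntW).const_mul _
    have hz : ∫ x, h' x ∂(Measure.pi fun j => gaussianReal (ξ j) v) = 0 := by
      simp only [hh']
      simp_rw [← smul_eq_mul (a := ξ i)]
      rw [integral_smul, hsub, smul_zero]
    have hkey : ∀ x, h' x = (ξ i * x i * (1 - w (x i))) * f x := fun x => by
      simp only [hh']; ring
    have hnonneg : 0 ≤ h' := fun x => by
      rw [hkey x]
      refine mul_nonneg ?_ (hf_nonneg x)
      simp only [hw]
      exact key_sign hv _ _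
    obtain ⟨x₀, hx₀⟩ := Function.ne_iff.mp hf_ne
    have hx₀pos : 0 < f x₀ := (hf_nonneg x₀).lt_of_ne (Ne.symm hx₀)
    obtain ⟨y, hfy, hyi⟩ : ∃ y : Fin m → ℝ, 0 < f y ∧ y i ≠ 0 := by
      by_cases h0 : x₀ i = 0
      · have hup : Continuous fun t : ℝ => Function.update x₀ i t := by
          apply continuous_pi
          intro j
          simp only [Function.update_apply]
          rcases eq_or_ne j i with rfl | hj
          · simp only [if_pos rfl]; exact continuous_id
          · simp only [if_neg hj]; exact continuous_const
        have hSopen : IsOpen ((fun t : ℝ => f (Function.update x₀ i t)) ⁻¹' Set.Ioi 0) :=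
          isOpen_Ioi.preimage (hf_cont.comp hup)
        have h0mem : (0:ℝ) ∈ (fun t : ℝ => f (Function.update x₀ i t)) ⁻¹' Set.Ioi 0 := by
          simp only [Set.mem_preimage, Set.mem_Ioi]
          have hx : Function.update x₀ i 0 = x₀ := by
            rw [← h0]; exact Function.update_eq_self i x₀
          rw [hx]; exact hx₀pos
        obtain ⟨ε, hε, hball⟩ := Metric.isOpen_iff.mp hSopen 0 h0mem
        refine ⟨Function.update x₀ i (ε/2), ?_, ?_⟩
        · have hmem : ε/2 ∈ Metric.ball (0:ℝ) ε := by
            simp only [Metric.mem_ball, Real.dist_eq, sub_zero,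
              abs_of_pos (by linarith : (0:ℝ) < ε/2)]
            linarith
          simpa using hball hmem
        · simp only [Function.update_self]
          exact ne_of_gt (by linarith)
      · exact ⟨x₀, hx₀pos, h0⟩
    have hcont' : Continuous h' := by
      have hwi : Continuous fun x : Fin m → ℝ => w (x i) := hcw.comp (continuous_apply i)
      exact continuous_const.mul ((hf_cont.mul (continuous_apply i)).sub
        (hwi.mul (hf_cont.mul (continuous_apply i))))
    haveI : ∀ j, (gaussianReal (ξ j) v).IsOpenPosMeasure :=
      fun j => gaussianReal_isOpenPosMeasure _ hv
    have hpos : 0 < ∫ x, h' x ∂(Measure.pi fun j => gaussianReal (ξ j) v) := by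
      rw [integral_pos_iff_support_of_nonneg hnonneg hint2]
      have hU : IsOpen {x : Fin m → ℝ | 0 < h' x} := isOpen_lt continuous_const hcont'
      have hyU : y ∈ {x : Fin m → ℝ | 0 < h' x} := by
        rw [Set.mem_setOf_eq, hkey]
        refine mul_pos ?_ hfy
        simp only [hw]
        exact key_sign_pos hv hc hyi
      refine lt_of_lt_of_le (hU.measure_pos _ ⟨y, hyU⟩) (measure_mono fun x hx => ?_)
      exact ne_of_gt hx
    exact absurd hz (ne_of_gt hpos)
  · intro hξ i
    have hupd : Function.update ξ i (-(ξ i)) = ξ := by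
      subst hξ
      funext j
      rcases eq_or_ne j i with rfl | hj
      · simp
      · simp [Function.update_of_ne hj]
    have h := integral_reflect ξ v i f hf_cont (hf_even i)
    rw [hupd] at h
    linarith
end

section
/- Let ξ ∈ ℝ^m with ξ ≠ 0, let Z ~ N(ξ, σ² I_m) with σ ≠ 0, and let w : [0,∞) → [0,1] be bounded, measurable, with E[w(‖Z‖²)] > 0 (e.g., w nonzero and continuous). Then the equation E[w(‖Z‖²) Z] / E[w(‖Z‖²)] = 0 fails; equivalently, E[w(‖Z‖²) Z] = 0 holds if and only if ξ = 0. -/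
open MeasureTheory ProbabilityTheory Real

namespace GWMZ
open scoped ENNReal NNReal

variable {v : NNReal} {c : ℝ}

lemma vpos (hv : v ≠ 0) : (0:ℝ) < v := by exact_mod_cast hv.bot_lt

lemma pdf_neg (c : ℝ) (v : NNReal) (t : ℝ) :
    gaussianPDFReal c v (-t) = gaussianPDFReal (-c) v t := by
  unfold gaussianPDFReal; ring_nf

lemma pdf_lt (hv : v ≠ 0) {c t : ℝ} (hc : 0 < c) (ht : 0 < t) :
    gaussianPDFReal (-c) v t < gaussianPDFReal c v t := by
  unfold gaussianPDFReal
  have hvpos := vpos hv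
  have hs : (0:ℝ) < (√(2 * π * v))⁻¹ := by
    have : (0:ℝ) < 2 * π * v := by positivity
    positivity
  refine mul_lt_mul_of_pos_left ?_ hs
  apply Real.exp_lt_exp.mpr
  apply div_lt_div_of_pos_right ?_ (by positivity)
  nlinarith [sq_nonneg (t+c), sq_nonneg (t-c)]

lemma gauss_integral (hv : v ≠ 0) (g : ℝ → ℝ) :
    ∫ t, g t ∂(gaussianReal c v) = ∫ t, gaussianPDFReal c v t * g t := by
  rw [gaussianReal_of_var_ne_zero _ hv, gaussianPDF_def]
  have h : ∀ x : ℝ, ENNReal.ofReal (gaussianPDFReal c v x)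
      = ((gaussianPDFReal c v x).toNNReal : ℝ≥0∞) := fun x => rfl
  simp_rw [h]
  rw [integral_withDensity_eq_integral_smul
    ((measurable_gaussianPDFReal c v).real_toNNReal) g]
  congr 1 with t
  simp [NNReal.smul_def, Real.coe_toNNReal _ (gaussianPDFReal_nonneg c v t)]

lemma gauss_integrable_iff (hv : v ≠ 0) {g : ℝ → ℝ} :
    Integrable g (gaussianReal c v) ↔
      Integrable (fun t => gaussianPDFReal c v t * g t) volume := by
  rw [gaussianReal_of_var_ne_zero _ hv, gaussianPDF_def]
  have h : ∀ x : ℝ, ENNReal.ofReal (gaussianPDFReal c v x)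
      = ((gaussianPDFReal c v x).toNNReal : ℝ≥0∞) := fun x => rfl
  simp_rw [h]
  rw [integrable_withDensity_iff_integrable_smul
    ((measurable_gaussianPDFReal c v).real_toNNReal)]
  constructor <;> intro hI <;> refine hI.congr (Filter.Eventually.of_forall fun t => ?_) <;>
    simp [NNReal.smul_def, Real.coe_toNNReal _ (gaussianPDFReal_nonneg c v t)]

lemma integrable_pdf_mul_id (c : ℝ) (v : NNReal) :
    Integrable (fun t => gaussianPDFReal c v t * t) volume := by
  by_cases hv : v = 0
  · simp [hv, gaussianPDFReal_zero_var]
  have hvpos := vpos hv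
  have hb : (0:ℝ) < (2 * (v:ℝ))⁻¹ := by positivity
  have h1 : Integrable (fun t : ℝ => rexp (-(2*(v:ℝ))⁻¹ * t^2) * (t + c)) volume :=
    ((integrable_mul_exp_neg_mul_sq hb).add
      ((integrable_exp_neg_mul_sq hb).const_mul c)).congr
      (Filter.Eventually.of_forall fun t => by simp only [Pi.add_apply]; ring)
  have h3 := (h1.comp_sub_right c).const_mul ((√(2 * π * (v:ℝ)))⁻¹)
  refine h3.congr (Filter.Eventually.of_forall fun t => ?_)
  show (√(2 * π * (v:ℝ)))⁻¹ * (rexp (-(2*(v:ℝ))⁻¹ * (t - c)^2) * (t - c + c))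
      = gaussianPDFReal c v t * t
  unfold gaussianPDFReal
  rw [show -(2*(v:ℝ))⁻¹ * (t - c)^2 = -(t - c)^2 / (2*(v:ℝ)) by rw [div_eq_mul_inv]; ring]
  ring

section FG

variable (w : ℝ → ℝ) (c : ℝ) (v : NNReal) (s : ℝ)

/-- weighted first moment -/
noncomputable def Fc : ℝ := ∫ t, w (t^2 + s) * t ∂(gaussianReal c v)
/-- weighted mass -/
noncomputable def Gc : ℝ := ∫ t, w (t^2 + s) ∂(gaussianReal c v)

variable {w c v s}

lemma integrable_g (hv : v ≠ 0) (hw_meas : Measurable w) (hw_nonneg : ∀ t, 0 ≤ w t)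
    (hw_le : ∀ t, w t ≤ 1) :
    Integrable (fun t => gaussianPDFReal c v t * (w (t^2 + s) * t)) volume := by
  refine (integrable_pdf_mul_id c v).mono ?_ (Filter.Eventually.of_forall fun t => ?_)
  · exact ((measurable_gaussianPDFReal c v).mul
      ((hw_meas.comp (by fun_prop)).mul measurable_id)).aestronglyMeasurable
  · have h0 := gaussianPDFReal_nonneg c v t
    have h1 := hw_nonneg (t^2 + s)
    have h2 := hw_le (t^2 + s)
    simp only [norm_mul, Real.norm_eq_abs, abs_of_nonneg h0, abs_of_nonneg h1]
    calc gaussianPDFReal c v t * (w (t^2+s) * |t|)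
        ≤ gaussianPDFReal c v t * (1 * |t|) := by
          apply mul_le_mul_of_nonneg_left (by apply mul_le_mul_of_nonneg_right h2 (abs_nonneg t)) h0
      _ = gaussianPDFReal c v t * |t| := by ring

lemma Fc_eq_h (hv : v ≠ 0) (hw_meas : Measurable w) (hw_nonneg : ∀ t, 0 ≤ w t)
    (hw_le : ∀ t, w t ≤ 1) :
    Fc w c v s = ∫ t, w (t^2 + s) * t *
      (gaussianPDFReal c v t - gaussianPDFReal c v (-t)) / 2 := by
  have hg := integrable_g (c := c) (s := s) hv hw_meas hw_nonneg hw_le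
  have hgneg : Integrable
      (fun t => gaussianPDFReal c v (-t) * (w ((-t)^2 + s) * (-t))) volume := by
    have := (Measure.measurePreserving_neg (volume : Measure ℝ)).integrable_comp
      hg.aestronglyMeasurable |>.mpr hg
    exact this
  have hneg : ∫ t, gaussianPDFReal c v (-t) * (w ((-t)^2 + s) * (-t))
      = ∫ t, gaussianPDFReal c v t * (w (t^2 + s) * t) := by
    exact integral_neg_eq_self (fun u => gaussianPDFReal c v u * (w (u^2+s) * u)) volume
  rw [Fc, gauss_integral hv]
  have : (∫ t, gaussianPDFReal c v t * (w (t^2 + s) * t))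
      = (∫ t, (gaussianPDFReal c v t * (w (t^2 + s) * t)
          + gaussianPDFReal c v (-t) * (w ((-t)^2 + s) * (-t))) / 2) := by
    rw [integral_div, integral_add hg hgneg, hneg]
    ring
  rw [this]
  congr 1 with t
  rw [neg_sq]
  ring

lemma h_nonneg (hv : v ≠ 0) (hw_nonneg : ∀ t, 0 ≤ w t) (hc : 0 < c) (t : ℝ) :
    0 ≤ w (t^2 + s) * t * (gaussianPDFReal c v t - gaussianPDFReal c v (-t)) / 2 := by
  have key : 0 ≤ t * (gaussianPDFReal c v t - gaussianPDFReal c v (-t)) := by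
    rcases lt_trichotomy t 0 with ht | ht | ht
    · have h1 : gaussianPDFReal c v t = gaussianPDFReal (-c) v (-t) := by
        rw [← pdf_neg, neg_neg]
      have h2 := pdf_lt hv hc (neg_pos.mpr ht)
      rw [h1]
      nlinarith
    · simp [ht]
    · have h1 : gaussianPDFReal c v (-t) = gaussianPDFReal (-c) v t := pdf_neg c v t
      have h2 := pdf_lt hv hc ht
      rw [h1]
      nlinarith
  have hw := hw_nonneg (t^2 + s)
  have : w (t^2+s) * t * (gaussianPDFReal c v t - gaussianPDFReal c v (-t))
      = w (t^2+s) * (t * (gaussianPDFReal c v t - gaussianPDFReal c v (-t))) := by ring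
  rw [this]
  positivity

lemma h_pos (hv : v ≠ 0) (hc : 0 < c) {t : ℝ} (ht : t ≠ 0) (hwp : 0 < w (t^2 + s)) :
    0 < w (t^2 + s) * t * (gaussianPDFReal c v t - gaussianPDFReal c v (-t)) / 2 := by
  have key : 0 < t * (gaussianPDFReal c v t - gaussianPDFReal c v (-t)) := by
    rcases ht.lt_or_gt with ht | ht
    · have h1 : gaussianPDFReal c v t = gaussianPDFReal (-c) v (-t) := by
        rw [← pdf_neg, neg_neg]
      have h2 := pdf_lt hv hc (neg_pos.mpr ht)
      rw [h1]
      nlinarith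
    · have h1 : gaussianPDFReal c v (-t) = gaussianPDFReal (-c) v t := pdf_neg c v t
      have h2 := pdf_lt hv hc ht
      rw [h1]
      nlinarith
  have : w (t^2+s) * t * (gaussianPDFReal c v t - gaussianPDFReal c v (-t))
      = w (t^2+s) * (t * (gaussianPDFReal c v t - gaussianPDFReal c v (-t))) := by ring
  rw [this]
  positivity

lemma integrable_h (hv : v ≠ 0) (hw_meas : Measurable w) (hw_nonneg : ∀ t, 0 ≤ w t)
    (hw_le : ∀ t, w t ≤ 1) :
    Integrable (fun t => w (t^2 + s) * t *
      (gaussianPDFReal c v t - gaussianPDFReal c v (-t)) / 2) volume := by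
  have hg := integrable_g (c := c) (s := s) hv hw_meas hw_nonneg hw_le
  have hgneg : Integrable
      (fun t => gaussianPDFReal c v (-t) * (w ((-t)^2 + s) * (-t))) volume := by
    have := (Measure.measurePreserving_neg (volume : Measure ℝ)).integrable_comp
      hg.aestronglyMeasurable |>.mpr hg
    exact this
  refine ((hg.add hgneg).div_const 2).congr (Filter.Eventually.of_forall fun t => ?_)
  simp only [Pi.add_apply, neg_sq]
  ring

lemma Gc_nonneg (hw_nonneg : ∀ t, 0 ≤ w t) : 0 ≤ Gc w c v s :=
  integral_nonneg fun t => hw_nonneg _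

lemma Fc_nonneg (hv : v ≠ 0) (hw_meas : Measurable w) (hw_nonneg : ∀ t, 0 ≤ w t)
    (hw_le : ∀ t, w t ≤ 1) (hc : 0 < c) : 0 ≤ Fc w c v s := by
  rw [Fc_eq_h hv hw_meas hw_nonneg hw_le]
  exact integral_nonneg (h_nonneg hv hw_nonneg hc)

lemma Fc_pos (hv : v ≠ 0) (hw_meas : Measurable w) (hw_nonneg : ∀ t, 0 ≤ w t)
    (hw_le : ∀ t, w t ≤ 1) (hc : 0 < c) (hG : 0 < Gc w c v s) : 0 < Fc w c v s := by
  rw [Fc_eq_h hv hw_meas hw_nonneg hw_le]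
  rw [integral_pos_iff_support_of_nonneg (h_nonneg hv hw_nonneg hc)
    (integrable_h hv hw_meas hw_nonneg hw_le)]
  by_contra hns
  push_neg at hns
  have hns0 : volume (Function.support fun t => w (t^2 + s) * t *
      (gaussianPDFReal c v t - gaussianPDFReal c v (-t)) / 2) = 0 := le_antisymm hns bot_le
  -- then the weight function vanishes a.e.
  have hsub : (Function.support fun t => gaussianPDFReal c v t * w (t^2 + s))
      ⊆ (Function.support fun t => w (t^2 + s) * t *
          (gaussianPDFReal c v t - gaussianPDFReal c v (-t)) / 2) ∪ {0} := by
    intro t ht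
    by_cases ht0 : t = 0
    · exact Set.mem_union_right _ (by simp [ht0])
    · left
      have hwp : 0 < w (t^2 + s) := by
        rcases (hw_nonneg (t^2+s)).lt_or_eq with h | h
        · exact h
        · exfalso; apply ht; simp [Function.mem_support, ← h]
      exact Function.mem_support.mpr (h_pos hv hc ht0 hwp).ne'
  have hnull : volume (Function.support fun t => gaussianPDFReal c v t * w (t^2 + s)) = 0 :=
    measure_mono_null hsub (by
      refine measure_union_null hns0 (measure_singleton 0))
  have hae : (fun t => gaussianPDFReal c v t * w (t^2 + s)) =ᵐ[volume] 0 := by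
    rw [Filter.EventuallyEq, ae_iff]
    convert hnull using 2
    ext t; simp
  rw [Gc, gauss_integral hv] at hG
  rw [integral_congr_ae hae] at hG
  simp at hG

lemma Fc_neg_eq (hv : v ≠ 0) : Fc w (-c) v s = - Fc w c v s := by
  rw [Fc, Fc, gauss_integral hv, gauss_integral hv,
    ← integral_neg_eq_self (fun u => gaussianPDFReal (-c) v u * (w (u^2+s) * u)) volume]
  rw [← integral_neg]
  congr 1 with t
  rw [pdf_neg, neg_neg, neg_sq]
  ring

lemma Gc_neg_eq (hv : v ≠ 0) : Gc w (-c) v s = Gc w c v s := by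
  rw [Gc, Gc, gauss_integral hv, gauss_integral hv,
    ← integral_neg_eq_self (fun u => gaussianPDFReal (-c) v u * w (u^2+s)) volume]
  congr 1 with t
  rw [pdf_neg, neg_neg, neg_sq]

/-- sign-unified versions -/
noncomputable def sgn (c : ℝ) : ℝ := if 0 < c then 1 else -1

lemma sgnF_nonneg (hv : v ≠ 0) (hw_meas : Measurable w) (hw_nonneg : ∀ t, 0 ≤ w t)
    (hw_le : ∀ t, w t ≤ 1) (hc : c ≠ 0) : 0 ≤ sgn c * Fc w c v s := by
  unfold sgn
  by_cases h : 0 < c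
  · simp only [h, if_pos]
    rw [one_mul]
    exact Fc_nonneg hv hw_meas hw_nonneg hw_le h
  · simp only [h, if_neg, not_false_eq_true]
    have hcneg : 0 < -c := by
      rcases hc.lt_or_gt with h' | h'
      · linarith
      · exact absurd h' h
    have := Fc_nonneg (c := -c) (s := s) hv hw_meas hw_nonneg hw_le hcneg
    rw [Fc_neg_eq hv] at this
    linarith

lemma sgnF_pos (hv : v ≠ 0) (hw_meas : Measurable w) (hw_nonneg : ∀ t, 0 ≤ w t)
    (hw_le : ∀ t, w t ≤ 1) (hc : c ≠ 0) (hG : 0 < Gc w c v s) : 0 < sgn c * Fc w c v s := by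
  unfold sgn
  by_cases h : 0 < c
  · simp only [h, if_pos]
    rw [one_mul]
    exact Fc_pos hv hw_meas hw_nonneg hw_le h hG
  · simp only [h, if_neg, not_false_eq_true]
    have hcneg : 0 < -c := by
      rcases hc.lt_or_gt with h' | h'
      · linarith
      · exact absurd h' h
    have hG' : 0 < Gc w (-c) v s := by rw [Gc_neg_eq hv]; exact hG
    have := Fc_pos (c := -c) (s := s) hv hw_meas hw_nonneg hw_le hcneg hG'
    rw [Fc_neg_eq hv] at this
    linarith

end FG

section Multi

variable {v : NNReal}

lemma integrable_id_gauss (hv : v ≠ 0) (c : ℝ) :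
    Integrable (fun t : ℝ => t) (gaussianReal c v) :=
  (gauss_integrable_iff hv).mpr (by simpa using integrable_pdf_mul_id c v)

lemma neg_mp (hv : v ≠ 0) :
    MeasurePreserving (fun t : ℝ => -t) (gaussianReal 0 v) (gaussianReal 0 v) := by
  refine ⟨measurable_neg, ?_⟩
  have h := gaussianReal_map_const_mul (μ := 0) (v := v) (-1)
  have he : (fun t : ℝ => -t) = (fun t : ℝ => (-1) * t) := by
    funext t; ring
  rw [he]
  rw [show ((-1 : ℝ) * ·) = (fun t : ℝ => (-1) * t) from rfl] at h
  rw [h]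
  norm_num

end Multi

end GWMZ

open GWMZ

/-- for `Z ~ N(ξ, σ² I_m)` (product of one-dimensional Gaussians, `σ² ≠ 0`)
and `w : [0,∞) → [0,1]` measurable with `E[w(‖Z‖²)] > 0`, the vector equation
`E[w(‖Z‖²) Z] = 0` holds if and only if `ξ = 0`; in particular it fails whenever `ξ ≠ 0`. -/
theorem gaussian_weighted_mean_zero_iff (m : ℕ) (ξ : Fin m → ℝ) (v : NNReal) (hv : v ≠ 0)
    (w : ℝ → ℝ) (hw_meas : Measurable w) (hw_nonneg : ∀ t, 0 ≤ w t) (hw_le : ∀ t, w t ≤ 1)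
    (hw_pos : 0 < ∫ x, w (∑ k, x k ^ 2) ∂(Measure.pi fun i => gaussianReal (ξ i) v)) :
    (∀ i : Fin m,
        (∫ x, w (∑ k, x k ^ 2) * x i ∂(Measure.pi fun i => gaussianReal (ξ i) v)) = 0)
      ↔ ξ = 0 := by
  constructor
  · intro H
    by_contra hξ
    have hex : ∃ i, ξ i ≠ 0 := by
      by_contra h
      push_neg at h
      exact hξ (funext fun i => h i)
    obtain ⟨i, hci⟩ := hex
    obtain ⟨n, rfl⟩ : ∃ n, m = n + 1 := ⟨m - 1, (Nat.succ_pred_eq_of_pos i.pos).symm⟩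
    set γ := gaussianReal (ξ i) v with hγ
    set ν := (Measure.pi fun j : Fin n => gaussianReal (ξ (i.succAbove j)) v) with hν
    set e := MeasurableEquiv.piFinSuccAbove (fun _ : Fin (n+1) => ℝ) i with he
    have hmp : MeasurePreserving e (Measure.pi fun j => gaussianReal (ξ j) v) (γ.prod ν) :=
      measurePreserving_piFinSuccAbove (fun j => gaussianReal (ξ j) v) i
    set g : ℝ × (Fin n → ℝ) → ℝ := fun p => w (p.1^2 + ∑ j, (p.2 j)^2) * p.1 with hg
    set g0 : ℝ × (Fin n → ℝ) → ℝ := fun p => w (p.1^2 + ∑ j, (p.2 j)^2) with hg0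
    have hsum : ∀ x : Fin (n+1) → ℝ, (∑ k, x k ^ 2) = (e x).1 ^ 2 + ∑ j, ((e x).2 j) ^ 2 := by
      intro x
      have h := Fin.sum_univ_succAbove (fun k => x k ^ 2) i
      exact h
    have hx1 : ∀ x : Fin (n+1) → ℝ, (e x).1 = x i := by
      intro x
      rfl
    have hg_meas : Measurable g := by
      apply Measurable.mul ?_ measurable_fst
      apply hw_meas.comp
      apply Measurable.add
      · exact measurable_fst.pow_const 2
      · exact Finset.measurable_sum _ fun j _ =>
          ((measurable_pi_apply j).comp measurable_snd).pow_const 2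
    have hg0_meas : Measurable g0 := by
      apply hw_meas.comp
      apply Measurable.add
      · exact measurable_fst.pow_const 2
      · exact Finset.measurable_sum _ fun j _ =>
          ((measurable_pi_apply j).comp measurable_snd).pow_const 2
    have hfst : Integrable (fun p : ℝ × (Fin n → ℝ) => p.1) (γ.prod ν) := by
      have hmap : (γ.prod ν).map Prod.fst = γ := by
        rw [Measure.map_fst_prod]
        simp
      have hid := integrable_id_gauss hv (ξ i)
      rw [← hγ, ← hmap] at hid
      exact (integrable_map_measure hid.aestronglyMeasurable
        measurable_fst.aemeasurable).mp hid
    have hIntg : Integrable g (γ.prod ν) := by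
      refine hfst.mono hg_meas.aestronglyMeasurable (Filter.Eventually.of_forall fun p => ?_)
      simp only [hg, Real.norm_eq_abs, abs_mul]
      have h1 := hw_nonneg (p.1^2 + ∑ j, (p.2 j)^2)
      have h2 := hw_le (p.1^2 + ∑ j, (p.2 j)^2)
      calc |w (p.1^2 + ∑ j, (p.2 j)^2)| * |p.1| ≤ 1 * |p.1| := by
            apply mul_le_mul_of_nonneg_right _ (abs_nonneg _)
            rw [abs_of_nonneg h1]
            exact h2
        _ = |p.1| := one_mul _
    have hIntg0 : Integrable g0 (γ.prod ν) := by
      refine (integrable_const (1:ℝ)).mono hg0_meas.aestronglyMeasurable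
        (Filter.Eventually.of_forall fun p => ?_)
      simp only [hg0, Real.norm_eq_abs]
      rw [abs_of_nonneg (hw_nonneg _)]
      simpa using hw_le _
    have h1 : (∫ x, w (∑ k, x k ^ 2) * x i ∂(Measure.pi fun j => gaussianReal (ξ j) v))
        = ∫ y, Fc w (ξ i) v (∑ j, (y j)^2) ∂ν := by
      have e1 : (∫ x, w (∑ k, x k ^ 2) * x i ∂(Measure.pi fun j => gaussianReal (ξ j) v))
          = ∫ x, g (e x) ∂(Measure.pi fun j => gaussianReal (ξ j) v) := by
        congr 1 with x
        rw [hg]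
        simp only
        rw [← hsum x, hx1 x]
      rw [e1, hmp.integral_comp e.measurableEmbedding, integral_prod_symm g hIntg]
      rfl
    have h2 : (∫ x, w (∑ k, x k ^ 2) ∂(Measure.pi fun j => gaussianReal (ξ j) v))
        = ∫ y, Gc w (ξ i) v (∑ j, (y j)^2) ∂ν := by
      have e1 : (∫ x, w (∑ k, x k ^ 2) ∂(Measure.pi fun j => gaussianReal (ξ j) v))
          = ∫ x, g0 (e x) ∂(Measure.pi fun j => gaussianReal (ξ j) v) := by
        congr 1 with x
        rw [hg0]
        simp only
        rw [← hsum x]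
      rw [e1, hmp.integral_comp e.measurableEmbedding, integral_prod_symm g0 hIntg0]
      rfl
    have hIntF : Integrable (fun y => Fc w (ξ i) v (∑ j, (y j)^2)) ν := by
      have h := hIntg.integral_prod_right
      exact h
    have hzero : ∫ y, sgn (ξ i) * Fc w (ξ i) v (∑ j, (y j)^2) ∂ν = 0 := by
      rw [integral_const_mul, ← h1, H i, mul_zero]
    have hae : (fun y => sgn (ξ i) * Fc w (ξ i) v (∑ j, (y j)^2)) =ᵐ[ν] 0 := by
      rw [← integral_eq_zero_iff_of_nonneg_ae]
      · exact hzero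
      · exact Filter.Eventually.of_forall fun y =>
          sgnF_nonneg hv hw_meas hw_nonneg hw_le hci
      · exact hIntF.const_mul _
    have haeG : (fun y => Gc w (ξ i) v (∑ j, (y j)^2)) =ᵐ[ν] 0 := by
      filter_upwards [hae] with y hy
      simp only [Pi.zero_apply] at hy ⊢
      by_contra hGy
      have hGpos : 0 < Gc w (ξ i) v (∑ j, (y j)^2) :=
        (Gc_nonneg hw_nonneg).lt_of_ne (Ne.symm hGy)
      have h := sgnF_pos hv hw_meas hw_nonneg hw_le hci hGpos
      rw [hy] at h
      exact lt_irrefl 0 h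
    rw [h2, integral_congr_ae haeG] at hw_pos
    simp at hw_pos
  · rintro rfl i
    simp only [Pi.zero_apply]
    set π₀ := (Measure.pi fun _ : Fin m => gaussianReal (0:ℝ) v) with hπ₀
    have hmp : MeasurePreserving (fun x : Fin m → ℝ => fun j => -(x j)) π₀ π₀ :=
      measurePreserving_pi _ _ (fun j => neg_mp hv)
    set f : (Fin m → ℝ) → ℝ := fun x => w (∑ k, x k ^ 2) * x i with hf
    have hf_meas : Measurable f := by
      apply Measurable.mul ?_ (measurable_pi_apply i)
      apply hw_meas.comp
      exact Finset.measurable_sum _ fun k _ => (measurable_pi_apply k).pow_const 2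
    have key : (∫ x, f x ∂π₀) = - ∫ x, f x ∂π₀ := by
      conv_lhs => rw [← hmp.map_eq]
      rw [integral_map hmp.measurable.aemeasurable]
      · rw [← integral_neg]
        congr 1 with x
        simp only [hf, neg_sq]
        ring_nf
      · rw [hmp.map_eq]
        exact hf_meas.aestronglyMeasurable
    have hzero : (∫ x, f x ∂π₀) = 0 := by linarith
    simpa [hf] using hzero
end

section
/- The generalized Marcum Q-function Q_{m/2}(a, b) = P(X > b), where X is the norm of an m-dimensional Gaussian vector with mean of norm a and identity covariance, is nondecreasing in its first argument a for each fixed b ≥ 0. -/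
open MeasureTheory ProbabilityTheory Real

lemma gpdf_shift (c x : ℝ) : gaussianPDFReal 0 1 (c - x) = gaussianPDFReal c 1 x := by
  simp only [gaussianPDFReal]
  ring_nf

lemma gpdf_anti {x y : ℝ} (h : |x| ≤ |y|) :
    gaussianPDFReal 0 1 y ≤ gaussianPDFReal 0 1 x := by
  simp only [gaussianPDFReal, sub_zero, NNReal.coe_one, mul_one]
  have hxy : x ^ 2 ≤ y ^ 2 := by nlinarith [abs_nonneg x, sq_abs x, sq_abs y]
  have h2 : Real.exp (-y ^ 2 / 2) ≤ Real.exp (-x ^ 2 / 2) := by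
    apply Real.exp_le_exp.2; linarith
  have h3 : (0:ℝ) ≤ (√(2 * π))⁻¹ := by positivity
  exact mul_le_mul_of_nonneg_left h2 h3

lemma gauss_interval_int (p q : ℝ) :
    (gaussianReal 0 1) (Set.Icc p q) =
      ENNReal.ofReal (∫ x in p..q, gaussianPDFReal 0 1 x) := by
  rcases le_or_gt p q with hpq | hpq
  · rw [gaussianReal_apply_eq_integral 0 one_ne_zero, integral_Icc_eq_integral_Ioc,
      ← intervalIntegral.integral_of_le hpq]
  · rw [Set.Icc_eq_empty (not_le.2 hpq), measure_empty, intervalIntegral.integral_symm]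
    rw [eq_comm, ENNReal.ofReal_eq_zero]
    simp only [neg_nonpos]
    exact intervalIntegral.integral_nonneg hpq.le fun x _ => gaussianPDFReal_nonneg _ _ _

/-- Core 1-d lemma. -/
lemma gauss_Icc_anti {t a a' : ℝ} (ht : 0 ≤ t) (ha : 0 ≤ a) (h : a ≤ a') :
    (gaussianReal 0 1) (Set.Icc (-t - a') (t - a')) ≤
      (gaussianReal 0 1) (Set.Icc (-t - a) (t - a)) := by
  have φint : ∀ c : ℝ, ∀ p q : ℝ, IntervalIntegrable (gaussianPDFReal c 1) volume p q :=
    fun c p q => (integrable_gaussianPDFReal c 1).intervalIntegrable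
  rw [gauss_interval_int, gauss_interval_int]
  apply ENNReal.ofReal_le_ofReal
  have key : ∫ x in (-t-a')..(t-a'), gaussianPDFReal 0 1 x
      = (∫ x in (-t-a)..(t-a), gaussianPDFReal 0 1 x)
        + (∫ x in (-t-a')..(-t-a), gaussianPDFReal 0 1 x)
        - (∫ x in (t-a')..(t-a), gaussianPDFReal 0 1 x) := by
    have h1 := intervalIntegral.integral_add_adjacent_intervals
      (φint 0 (-t-a') (-t-a)) (φint 0 (-t-a) (t-a'))
    have h2 := intervalIntegral.integral_add_adjacent_intervals
      (φint 0 (-t-a) (t-a')) (φint 0 (t-a') (t-a))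
    linarith
  rw [key]
  have hJ : (∫ x in (-t-a')..(-t-a), gaussianPDFReal 0 1 x)
      = ∫ x in (t-a')..(t-a), gaussianPDFReal (2*t) 1 x := by
    have e1 : (∫ x in (t+a)..(t+a'), gaussianPDFReal 0 1 (-x))
        = ∫ x in (-(t+a'))..(-(t+a)), gaussianPDFReal 0 1 x :=
      intervalIntegral.integral_comp_neg _
    have e2 : (∫ x in (t-a')..(t-a), gaussianPDFReal 0 1 (2*t - x))
        = ∫ x in (2*t-(t-a))..(2*t-(t-a')), gaussianPDFReal 0 1 x :=
      intervalIntegral.integral_comp_sub_left _ _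
    simp only [gpdf_shift] at e2
    have e3 : ∀ x, gaussianPDFReal 0 1 (-x) = gaussianPDFReal 0 1 x := by
      intro x; rw [show -x = 0 - x by ring, gpdf_shift]
    simp only [e3] at e1
    rw [show (-t-a' : ℝ) = -(t+a') by ring, show (-t-a : ℝ) = -(t+a) by ring, ← e1,
      show (t+a : ℝ) = 2*t-(t-a) by ring, show (t+a' : ℝ) = 2*t-(t-a') by ring, ← e2]
  rw [hJ]
  have hmono : (∫ x in (t-a')..(t-a), gaussianPDFReal (2*t) 1 x)
      ≤ ∫ x in (t-a')..(t-a), gaussianPDFReal 0 1 x := by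
    apply intervalIntegral.integral_mono_on (by linarith) (φint _ _ _) (φint _ _ _)
    intro x hx
    rw [← gpdf_shift]
    apply gpdf_anti
    have hx2 : x ≤ t - a := hx.2
    have h2tx : 0 ≤ 2*t - x := by linarith
    rw [abs_of_nonneg h2tx]
    rcases abs_cases x with ⟨hc, _⟩ | ⟨hc, _⟩ <;> linarith
  linarith

/-- 1-d slice monotonicity. -/
lemma gauss_slice_mono {c a a' : ℝ} (ha : 0 ≤ a) (h : a ≤ a') :
    (gaussianReal 0 1) {x : ℝ | c < (a + x) ^ 2} ≤
      (gaussianReal 0 1) {x : ℝ | c < (a' + x) ^ 2} := by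
  rcases lt_or_ge c 0 with hc | hc
  · have : ∀ d : ℝ, {x : ℝ | c < (d + x) ^ 2} = Set.univ := by
      intro d; ext x; simp only [Set.mem_setOf_eq, Set.mem_univ, iff_true]
      nlinarith [sq_nonneg (d + x)]
    rw [this a, this a']
  · set t := Real.sqrt c with htdef
    have ht : 0 ≤ t := Real.sqrt_nonneg c
    have ht2 : t ^ 2 = c := Real.sq_sqrt hc
    have hset : ∀ d : ℝ, {x : ℝ | c < (d + x) ^ 2} = (Set.Icc (-t - d) (t - d))ᶜ := by
      intro d; ext x
      simp only [Set.mem_setOf_eq, Set.mem_compl_iff, Set.mem_Icc, not_and_or, not_le]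
      constructor
      · intro hx
        rcases le_or_gt (d + x) 0 with hs | hs
        · left; nlinarith
        · right; nlinarith
      · rintro (hx | hx) <;> nlinarith
    rw [hset a, hset a']
    rw [measure_compl measurableSet_Icc (measure_ne_top _ _),
      measure_compl measurableSet_Icc (measure_ne_top _ _)]
    exact tsub_le_tsub_left (gauss_Icc_anti ht ha h) _

/-- the generalized Marcum Q-function
`Q_{m/2}(a, b) = P(‖a e₁ + W‖ > b)`, `W ~ N(0, I_m)`, is nondecreasing in the
noncentrality parameter `a ≥ 0` for each fixed `b ≥ 0`. -/
theorem marcum_mono_noncentrality (m : ℕ) (hm : 0 < m)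
    (QM : ℝ → ℝ → ℝ)
    (hQM : ∀ a t : ℝ, QM a t =
      ((Measure.pi fun _ : Fin m => gaussianReal 0 1)
        {y : Fin m → ℝ |
          t < Real.sqrt (∑ k, ((Pi.single (⟨0, hm⟩ : Fin m) a : Fin m → ℝ) k + y k) ^ 2)}).toReal)
    (b : ℝ) (hb : 0 ≤ b)
    (a a' : ℝ) (ha : 0 ≤ a) (haa' : a ≤ a') :
    QM a b ≤ QM a' b := by
  obtain ⟨n, rfl⟩ : ∃ n, m = n + 1 := ⟨m - 1, (Nat.succ_pred_eq_of_pos hm).symm⟩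
  have hT : ∀ d : ℝ, MeasurableSet {p : ℝ × (Fin n → ℝ) |
      b ^ 2 < (d + p.1) ^ 2 + ∑ j, (p.2 j) ^ 2} := by
    intro d
    apply measurableSet_lt measurable_const
    apply Measurable.add
    · exact ((measurable_fst.const_add d).pow_const 2)
    · apply Finset.measurable_sum
      intro j _
      exact ((measurable_pi_apply j).comp measurable_snd).pow_const 2
  have hset : ∀ d : ℝ, {y : Fin (n+1) → ℝ |
        b < Real.sqrt (∑ k, ((Pi.single (⟨0, hm⟩ : Fin (n+1)) d : Fin (n+1) → ℝ) k + y k) ^ 2)}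
      = (MeasurableEquiv.piFinSuccAbove (fun _ => ℝ) 0) ⁻¹'
        {p : ℝ × (Fin n → ℝ) | b ^ 2 < (d + p.1) ^ 2 + ∑ j, (p.2 j) ^ 2} := by
    intro d
    ext y
    have h0 : (⟨0, hm⟩ : Fin (n+1)) = 0 := rfl
    have hsum : ∑ k, ((Pi.single (⟨0, hm⟩ : Fin (n+1)) d : Fin (n+1) → ℝ) k + y k) ^ 2
        = (d + y 0) ^ 2 + ∑ j : Fin n, (y j.succ) ^ 2 := by
      rw [h0, Fin.sum_univ_succ]
      simp [Fin.succ_ne_zero]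
    simp only [Set.mem_setOf_eq, Set.mem_preimage, hsum, Real.lt_sqrt hb,
      MeasurableEquiv.piFinSuccAbove_apply, Fin.removeNth, Fin.succAbove_zero]
    exact Iff.rfl
  have hmp := measurePreserving_piFinSuccAbove (fun _ : Fin (n+1) => gaussianReal 0 1) 0
  have key : ∀ d : ℝ, (Measure.pi fun _ : Fin (n+1) => gaussianReal 0 1)
        {y : Fin (n+1) → ℝ |
          b < Real.sqrt (∑ k, ((Pi.single (⟨0, hm⟩ : Fin (n+1)) d : Fin (n+1) → ℝ) k + y k) ^ 2)}
      = ∫⁻ y, (gaussianReal 0 1) {x : ℝ | b ^ 2 - ∑ j, (y j) ^ 2 < (d + x) ^ 2}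
          ∂(Measure.pi fun _ : Fin n => gaussianReal 0 1) := by
    intro d
    rw [hset d, hmp.measure_preimage (hT d).nullMeasurableSet,
      Measure.prod_apply_symm (hT d)]
    apply lintegral_congr
    intro y
    congr 1
    ext x
    simp only [Set.mem_preimage, Set.mem_setOf_eq, sub_lt_iff_lt_add]
  rw [hQM, hQM]
  apply ENNReal.toReal_mono (measure_ne_top _ _)
  rw [key a, key a']
  exact lintegral_mono fun y => gauss_slice_mono ha haa'
end

section
/- With the setup of the previous statement, if additionally Σ_{n=1}^N w(ν_C²(z_n − θ)) > 0, then θ is a critical point of J if and only if θ is a fixed point of the map h_C(φ) = (Σ_n w(ν_C²(z_n − φ)) z_n) / (Σ_n w(ν_C²(z_n − φ))). -/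
open Matrix

noncomputable def bilinCLM (m : ℕ) (M : Matrix (Fin m) (Fin m) ℝ) :
    (Fin m → ℝ) →L[ℝ] (Fin m → ℝ) →L[ℝ] ℝ :=
  LinearMap.toContinuousLinearMap
    (LinearMap.toContinuousLinearMap.toLinearMap ∘ₗ (Matrix.toLinearMap₂' ℝ M))

lemma bilinCLM_apply (m : ℕ) (M : Matrix (Fin m) (Fin m) ℝ) (x y : Fin m → ℝ) :
    bilinCLM m M x y = x ⬝ᵥ M *ᵥ y := by
  simp [bilinCLM, Matrix.toLinearMap₂'_apply']

/-- with `ρ` increasing, convex, differentiable, `w = ρ'`, `C` positive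
definite, `ν_C²(x) = xᵀ C⁻¹ x`, `J(θ) = Σ_n ρ(ν_C²(z_n − θ))` and the additional
positivity `Σ_n w(ν_C²(z_n − θ)) > 0`, the point `θ` is a critical point of `J` iff it is
a fixed point of the weighted-mean map
`h_C(φ) = (Σ_n w(ν_C²(z_n − φ)) z_n) / (Σ_n w(ν_C²(z_n − φ)))`. -/
theorem critical_point_iff_fixed_point (m N : ℕ)
    (ρ : ℝ → ℝ) (hρ_mono : StrictMono ρ) (hρ_conv : ConvexOn ℝ Set.univ ρ)
    (hρ_diff : Differentiable ℝ ρ)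
    (C : Matrix (Fin m) (Fin m) ℝ) (hC : C.PosDef)
    (z : Fin N → (Fin m → ℝ)) (θ : Fin m → ℝ)
    (hpos : 0 < ∑ n, deriv ρ ((z n - θ) ⬝ᵥ C⁻¹ *ᵥ (z n - θ))) :
    fderiv ℝ (fun φ : Fin m → ℝ => ∑ n, ρ ((z n - φ) ⬝ᵥ C⁻¹ *ᵥ (z n - φ))) θ = 0 ↔
      (∑ n, deriv ρ ((z n - θ) ⬝ᵥ C⁻¹ *ᵥ (z n - θ)))⁻¹ •
          ∑ n, deriv ρ ((z n - θ) ⬝ᵥ C⁻¹ *ᵥ (z n - θ)) • z n = θ := by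
  classical
  have hCsym : Cᵀ = C := by
    have := hC.isHermitian
    simpa [Matrix.IsHermitian, Matrix.conjTranspose_eq_transpose_of_trivial] using this
  have hMsym : (C⁻¹)ᵀ = C⁻¹ := by rw [Matrix.transpose_nonsing_inv, hCsym]
  have hdet : IsUnit C.det := hC.det_pos.ne'.isUnit
  set B := bilinCLM m C⁻¹ with hBdef
  have hB : ∀ x y : Fin m → ℝ, B x y = x ⬝ᵥ C⁻¹ *ᵥ y := bilinCLM_apply m C⁻¹
  have hBsymm : ∀ x y : Fin m → ℝ, B x y = B y x := by
    intro x y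
    rw [hB, hB, Matrix.dotProduct_mulVec, ← Matrix.mulVec_transpose, hMsym,
      dotProduct_comm]
  set w : Fin N → ℝ := fun n => deriv ρ ((z n - θ) ⬝ᵥ C⁻¹ *ᵥ (z n - θ)) with hw
  set nid : (Fin m → ℝ) →L[ℝ] (Fin m → ℝ) := -(ContinuousLinearMap.id ℝ (Fin m → ℝ)) with hnid
  set D : Fin N → (Fin m → ℝ) →L[ℝ] ℝ := fun n =>
    B.precompR (Fin m → ℝ) (z n - θ) nid + B.precompL (Fin m → ℝ) nid (z n - θ) with hD
  have hne : (∑ n, w n) ≠ 0 := hpos.ne'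
  -- the derivative of J
  have hJ : HasFDerivAt (fun φ : Fin m → ℝ => ∑ n, ρ ((z n - φ) ⬝ᵥ C⁻¹ *ᵥ (z n - φ)))
      (∑ n ∈ Finset.univ, w n • D n) θ := by
    have key : ∀ n : Fin N, HasFDerivAt (fun φ : Fin m → ℝ => ρ ((z n - φ) ⬝ᵥ C⁻¹ *ᵥ (z n - φ)))
        (w n • D n) θ := by
      intro n
      have hid : HasFDerivAt (fun φ : Fin m → ℝ => z n - φ) nid θ := by
        have h0 : HasFDerivAt (fun φ : Fin m → ℝ => z n - φ)
            ((0 : (Fin m → ℝ) →L[ℝ] (Fin m → ℝ)) - ContinuousLinearMap.id ℝ (Fin m → ℝ)) θ :=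
          (hasFDerivAt_const (z n) θ).sub (hasFDerivAt_id θ)
        rw [hnid, ← zero_sub]
        exact h0
      have hq : HasFDerivAt (fun φ => B (z n - φ) (z n - φ)) (D n) θ :=
        B.hasFDerivAt_of_bilinear hid hid
      have := (hρ_diff (B (z n - θ) (z n - θ))).hasDerivAt.comp_hasFDerivAt θ hq
      simpa only [Function.comp_def, hB, hw] using this
    exact HasFDerivAt.fun_sum fun n _ => key n
  -- explicit value of the derivative
  have hDval : ∀ (n : Fin N) (v : Fin m → ℝ), D n v = -(2 * ((z n - θ) ⬝ᵥ C⁻¹ *ᵥ v)) := by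
    intro n v
    have h1 : D n v = B (z n - θ) (nid v) + B (nid v) (z n - θ) := rfl
    have h2 : nid v = -v := rfl
    rw [h1, h2, hBsymm (-v), map_neg]
    rw [hB]
    ring
  set s : Fin m → ℝ := ∑ n, w n • (z n - θ) with hs
  have hdot : ∀ u : Fin m → ℝ, s ⬝ᵥ u = ∑ n, w n * ((z n - θ) ⬝ᵥ u) := by
    intro u
    simp only [hs, dotProduct, Finset.sum_apply, Pi.smul_apply, smul_eq_mul,
      Finset.sum_mul, Finset.mul_sum, mul_assoc]
    rw [Finset.sum_comm]
  have hLval : ∀ v, (∑ n ∈ Finset.univ, w n • D n) v = -(2 * (s ⬝ᵥ C⁻¹ *ᵥ v)) := by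
    intro v
    rw [ContinuousLinearMap.sum_apply]
    simp only [ContinuousLinearMap.smul_apply, hDval, smul_eq_mul]
    rw [hdot, Finset.mul_sum, ← Finset.sum_neg_distrib]
    exact Finset.sum_congr rfl fun n _ => by ring
  rw [hJ.fderiv]
  constructor
  · intro h
    have h3 : -(2 * (s ⬝ᵥ C⁻¹ *ᵥ (C *ᵥ s))) = 0 := by
      rw [← hLval, h, ContinuousLinearMap.zero_apply]
    rw [Matrix.mulVec_mulVec, Matrix.nonsing_inv_mul C hdet, Matrix.one_mulVec] at h3
    have hss : s ⬝ᵥ s = 0 := by linarith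
    have hs0 : s = 0 := dotProduct_self_eq_zero.mp hss
    have hsum : ∑ n, w n • z n = (∑ n, w n) • θ := by
      have h4 : (∑ n, w n • z n) - (∑ n, w n) • θ = s := by
        rw [hs]
        rw [Finset.sum_smul]
        rw [← Finset.sum_sub_distrib]
        exact Finset.sum_congr rfl fun n _ => by rw [smul_sub]
      rw [hs0] at h4
      exact sub_eq_zero.mp h4
    rw [hsum, inv_smul_smul₀ hne]
  · intro h
    have hsum : ∑ n, w n • z n = (∑ n, w n) • θ := by
      have h5 := congrArg (fun x : Fin m → ℝ => (∑ n, w n) • x) h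
      rwa [smul_inv_smul₀ hne] at h5
    have hs0 : s = 0 := by
      rw [hs]
      have : ∀ n : Fin N, w n • (z n - θ) = w n • z n - w n • θ := fun n => smul_sub _ _ _
      simp only [this, Finset.sum_sub_distrib, ← Finset.sum_smul, hsum, sub_self]
    ext v
    rw [hLval, hs0]
    simp
end
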